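/- arXiv:2409.20518 — 5 statements merged into one kernel-verified Lean document; each statement's English description precedes it below -/
import Mathlib

section
/- The minimal cardinality of a subset X of the Cantor space 𝒫(ℕ) that is not an ω-γ set equals 𝔭. That is: (i) there is a set X ⊆ 𝒫(ℕ) of cardinality 𝔭 which has an open ω-cover with no point-cofinite subcover; and (ii) every X ⊆ 𝒫(ℕ) with |X| < 𝔭 is an ω-γ set. -/
open Set Filter Cardinal

namespace OmissionOfIntervals

/-- The Cantor space `𝒫(ℕ)`, identified with `ℕ → Bool` via characteristic functions,
with the product topology. -/
abbrev CantorSp : Type := ℕ → Bool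

/-- `Fin`: the points of the Cantor space coding finite subsets of `ℕ`. -/
def CFin : Set CantorSp := {x | {n | x n = true}.Finite}

/-- `[ℕ]^∞`: the points of the Cantor space coding infinite subsets of `ℕ`. -/
def CInf : Set CantorSp := {x | {n | x n = true}.Infinite}

/-- Increasing enumeration of the subset of `ℕ` coded by `x`. -/
noncomputable def enum (x : CantorSp) : ℕ → ℕ := Nat.nth (fun n => x n = true)

/-- `f ≤* g`: `f n ≤ g n` for all but finitely many `n`. -/
def LeStar (f g : ℕ → ℕ) : Prop := ∀ᶠ n in atTop, f n ≤ g n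

/-- `a ⊆* b`: the set coded by `a` is almost contained in the set coded by `b`. -/
def SubStar (a b : CantorSp) : Prop := {n | a n = true ∧ ¬ b n = true}.Finite

/-- A dominating family in the Baire space. -/
def Dominating (S : Set (ℕ → ℕ)) : Prop := ∀ f : ℕ → ℕ, ∃ s ∈ S, LeStar f s

/-- An unbounded (with respect to `≤*`) family in the Baire space. -/
def UnboundedFam (S : Set (ℕ → ℕ)) : Prop := ¬ ∃ g : ℕ → ℕ, ∀ s ∈ S, LeStar s g

/-- The dominating number `𝔡`. -/
noncomputable def frd : Cardinal := sInf {c | ∃ S : Set (ℕ → ℕ), Dominating S ∧ #S = c}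

/-- The bounding number `𝔟`. -/
noncomputable def frb : Cardinal := sInf {c | ∃ S : Set (ℕ → ℕ), UnboundedFam S ∧ #S = c}

/-- A centered family of infinite subsets of `ℕ`: every finite subfamily has infinite
intersection. -/
def Centered (S : Set CantorSp) : Prop :=
  S ⊆ CInf ∧ ∀ F : Finset CantorSp, ↑F ⊆ S → {n | ∀ x ∈ F, x n = true}.Infinite

/-- `S` has a pseudointersection: an infinite set almost contained in every member of `S`. -/
def HasPseudointersection (S : Set CantorSp) : Prop := ∃ a ∈ CInf, ∀ s ∈ S, SubStar a s

/-- The pseudointersection number `𝔭`. -/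
noncomputable def frp : Cardinal :=
  sInf {c | ∃ S : Set CantorSp, Centered S ∧ ¬ HasPseudointersection S ∧ #S = c}

/-- `S ⊆ [ℕ]^∞` is `κ`-unbounded: `|S| ≥ κ` and for every `b : ℕ → ℕ` only `< κ` many
members of `S` satisfy `s(n) ≤ b(n)` for all `n` (via increasing enumerations). -/
def KappaUnbounded (κ : Cardinal) (S : Set CantorSp) : Prop :=
  κ ≤ #S ∧ ∀ b : ℕ → ℕ, #{s ∈ S | ∀ n, enum s n ≤ b n} < κ

/-- `X` is `κ`-concentrated on `CFin`: `|X| ≥ κ` and `|X ∖ U| < κ` for every open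
`U ⊇ CFin`. -/
def KappaConcentrated (κ : Cardinal) (X : Set CantorSp) : Prop :=
  κ ≤ #X ∧ ∀ U : Set CantorSp, IsOpen U → CFin ⊆ U → #(X \ U : Set CantorSp) < κ

/-- An open cover of the space `X`. -/
def IsOpenCover {X : Type*} [TopologicalSpace X] (𝒰 : Set (Set X)) : Prop :=
  (∀ U ∈ 𝒰, IsOpen U) ∧ ⋃₀ 𝒰 = Set.univ

/-- A point-cofinite (γ-) open cover of the space `X`: an infinite family of open sets such
that every point belongs to all but finitely many members. -/
def PointCofiniteCover {X : Type*} [TopologicalSpace X] (𝒰 : Set (Set X)) : Prop :=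
  (∀ U ∈ 𝒰, IsOpen U) ∧ 𝒰.Infinite ∧ ∀ x : X, {U ∈ 𝒰 | x ∉ U}.Finite

/-- An ω-cover of the space `X`: no member contains all of `X`, and every finite subset of
`X` is contained in some member. -/
def OmegaCover {X : Type*} [TopologicalSpace X] (𝒰 : Set (Set X)) : Prop :=
  (∀ U ∈ 𝒰, IsOpen U) ∧ (∀ U ∈ 𝒰, U ≠ Set.univ) ∧ ∀ F : Finset X, ∃ U ∈ 𝒰, ↑F ⊆ U

/-- An ω-cover of the subset `Y` by open subsets of the ambient space `X`. -/
def OmegaCoverOf {X : Type*} [TopologicalSpace X] (𝒰 : Set (Set X)) (Y : Set X) : Prop :=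
  (∀ U ∈ 𝒰, IsOpen U) ∧ (∀ U ∈ 𝒰, ¬ Y ⊆ U) ∧ ∀ F : Finset X, ↑F ⊆ Y → ∃ U ∈ 𝒰, ↑F ⊆ U

/-- The Menger property. -/
def Menger (X : Type*) [TopologicalSpace X] : Prop :=
  ∀ 𝒰 : ℕ → Set (Set X), (∀ n, IsOpenCover (𝒰 n)) →
    ∃ 𝓕 : ℕ → Set (Set X), (∀ n, 𝓕 n ⊆ 𝒰 n ∧ (𝓕 n).Finite) ∧ ⋃₀ (⋃ n, 𝓕 n) = Set.univ

/-- The Hurewicz property. -/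
def Hurewicz (X : Type*) [TopologicalSpace X] : Prop :=
  ∀ 𝒰 : ℕ → Set (Set X), (∀ n, IsOpenCover (𝒰 n)) →
    (∀ n, ¬ ∃ 𝓕 ⊆ 𝒰 n, 𝓕.Finite ∧ ⋃₀ 𝓕 = Set.univ) →
    ∃ 𝓕 : ℕ → Set (Set X), (∀ n, 𝓕 n ⊆ 𝒰 n ∧ (𝓕 n).Finite) ∧
      ∀ x : X, ∀ᶠ n in atTop, x ∈ ⋃₀ 𝓕 n

/-- The property `S1(Γ,Γ)`. -/
def S1GammaGamma (X : Type*) [TopologicalSpace X] : Prop :=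
  ∀ 𝒰 : ℕ → Set (Set X), (∀ n, PointCofiniteCover (𝒰 n)) →
    ∃ U : ℕ → Set X, (∀ n, U n ∈ 𝒰 n) ∧ ∀ x : X, ∀ᶠ n in atTop, x ∈ U n

/-- The property `S1(Γ,O)`. -/
def S1GammaO (X : Type*) [TopologicalSpace X] : Prop :=
  ∀ 𝒰 : ℕ → Set (Set X), (∀ n, PointCofiniteCover (𝒰 n)) →
    ∃ U : ℕ → Set X, (∀ n, U n ∈ 𝒰 n) ∧ (⋃ n, U n) = Set.univ

/-- The property `S1(Ω,Γ)`. -/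
def S1OmegaGamma (X : Type*) [TopologicalSpace X] : Prop :=
  ∀ 𝒰 : ℕ → Set (Set X), (∀ n, OmegaCover (𝒰 n)) →
    ∃ U : ℕ → Set X, (∀ n, U n ∈ 𝒰 n) ∧ ∀ x : X, ∀ᶠ n in atTop, x ∈ U n

/-- `X` is an ω-γ set: every open ω-cover has a subfamily that is a point-cofinite cover. -/
def OmegaGammaSet (X : Type*) [TopologicalSpace X] : Prop :=
  ∀ 𝒰 : Set (Set X), OmegaCover 𝒰 → ∃ 𝒱 ⊆ 𝒰, PointCofiniteCover 𝒱

/-- The property `U_k(Γ,Γ)`. -/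
def UkGammaGamma (k : ℕ) (X : Type*) [TopologicalSpace X] : Prop :=
  ∀ 𝒰 : ℕ → Set (Set X), (∀ n, PointCofiniteCover (𝒰 n)) →
    (∀ n, ¬ ∃ 𝓕 : Finset (Set X), ↑𝓕 ⊆ 𝒰 n ∧ 𝓕.card ≤ k ∧ ⋃₀ (↑𝓕 : Set (Set X)) = Set.univ) →
    ∃ 𝓕 : ℕ → Finset (Set X), (∀ n, ↑(𝓕 n) ⊆ 𝒰 n ∧ (𝓕 n).card ≤ k) ∧
      ∀ x : X, ∀ᶠ n in atTop, x ∈ ⋃₀ ((𝓕 n : Finset (Set X)) : Set (Set X))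

/-- The property `U_id(Γ,Γ)`. -/
def UidGammaGamma (X : Type*) [TopologicalSpace X] : Prop :=
  ∀ 𝒰 : ℕ → Set (Set X), (∀ n, PointCofiniteCover (𝒰 n)) →
    (∀ n, ¬ ∃ 𝓕 : Finset (Set X), ↑𝓕 ⊆ 𝒰 n ∧ ⋃₀ (↑𝓕 : Set (Set X)) = Set.univ) →
    ∃ 𝓕 : ℕ → Finset (Set X), (∀ n, ↑(𝓕 n) ⊆ 𝒰 n ∧ (𝓕 n).card ≤ n) ∧
      ∀ x : X, ∀ᶠ n in atTop, x ∈ ⋃₀ ((𝓕 n : Finset (Set X)) : Set (Set X))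

/-- The set of terms of an ordinal-indexed sequence, below the ordinal `o`. -/
def rangeBelow (s : Ordinal → CantorSp) (o : Ordinal) : Set CantorSp := {x | ∃ α < o, x = s α}

/-- `s`, restricted to ordinals below `frb.ord`, is a `𝔟`-scale: an unbounded,
`≤*`-increasing `𝔟`-sequence of infinite subsets of `ℕ`. -/
def IsBScale (s : Ordinal → CantorSp) : Prop :=
  (∀ α < frb.ord, s α ∈ CInf) ∧
  UnboundedFam {f | ∃ α < frb.ord, f = enum (s α)} ∧
  ∀ α β : Ordinal, α < β → β < frb.ord → LeStar (enum (s α)) (enum (s β))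

/-- `t`, restricted to ordinals below `κ.ord`, is a `κ`-tower:
`⊆*`-decreasing sequence of infinite subsets of `ℕ`. -/
def IsTower (κ : Cardinal) (t : Ordinal → CantorSp) : Prop :=
  (∀ α < κ.ord, t α ∈ CInf) ∧
  ∀ α β : Ordinal, α < β → β < κ.ord → SubStar (t β) (t α)

/-- An unbounded `κ`-tower. -/
def IsUnboundedTower (κ : Cardinal) (t : Ordinal → CantorSp) : Prop :=
  IsTower κ t ∧ UnboundedFam {f | ∃ α < κ.ord, f = enum (t α)}

/-- `a ⊑ b`: for all but finitely many `n`, the interval `[b(n), b(n+1)]` contains at least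
two elements of the set coded by `a`. -/
def SqSubset (a b : CantorSp) : Prop :=
  ∀ᶠ n in atTop,
    2 ≤ ((Finset.Icc (enum b n) (enum b (n + 1))).filter (fun k => a k = true)).card

/-- `s`, restricted to ordinals below `frb.ord`, is a `𝔟(⊑)`-scale. -/
def IsBSqScale (s : Ordinal → CantorSp) : Prop :=
  (∀ α < frb.ord, s α ∈ CInf) ∧
  UnboundedFam {f | ∃ α < frb.ord, f = enum (s α)} ∧
  ∀ α β : Ordinal, α < β → β < frb.ord → SqSubset (s α) (s β)

open Classical in
noncomputable def chi (s : Set ℕ) : CantorSp := fun n => if n ∈ s then true else false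

lemma chi_eq_true {s : Set ℕ} {n : ℕ} : chi s n = true ↔ n ∈ s := by
  classical
  simp only [chi]
  split <;> simp_all

lemma setOf_chi (s : Set ℕ) : {n | chi s n = true} = s := by
  ext n; exact chi_eq_true

lemma chi_mem_CInf {s : Set ℕ} (hs : s.Infinite) : chi s ∈ CInf := by
  simpa [CInf, setOf_chi] using hs

/-- A centered family with no pseudointersection exists (from the hyperfilter). -/
lemma exists_centered_no_pseudo :
    ∃ S : Set CantorSp, Centered S ∧ ¬ HasPseudointersection S := by
  classical
  refine ⟨chi '' {s | s ∈ hyperfilter ℕ}, ⟨?_, ?_⟩, ?_⟩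
  · rintro _ ⟨s, hs, rfl⟩
    refine chi_mem_CInf ?_
    by_contra hfin
    exact (Set.not_infinite.1 hfin).notMem_hyperfilter hs
  · intro F hF
    have h : ∀ a ∈ F, ∃ s ∈ hyperfilter ℕ, chi s = a := fun a ha => hF ha
    choose! g hg1 hg2 using h
    have hmem : (⋂ a ∈ F, g a) ∈ hyperfilter ℕ := by
      exact (Filter.biInter_finset_mem F).2 (fun a ha => hg1 a ha)
    have hsub : (⋂ a ∈ F, g a) ⊆ {n | ∀ x ∈ F, x n = true} := by
      intro n hn x hx
      have := Set.mem_iInter₂.1 hn x hx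
      rw [← hg2 x hx]; exact chi_eq_true.2 this
    by_contra hfin
    have : {n | ∀ x ∈ F, x n = true}.Finite := Set.not_infinite.1 hfin
    exact (this.subset hsub).notMem_hyperfilter hmem
  · rintro ⟨a, haI, ha⟩
    set A : Set ℕ := {n | a n = true} with hA
    have hAinf : A.Infinite := haI
    set p : ℕ → Prop := fun n => n ∈ A with hp
    have hpinf : (setOf p).Infinite := hAinf
    have hsm := Nat.nth_strictMono (p := p) hpinf
    set A0 : Set ℕ := Set.range (fun k => Nat.nth p (2 * k)) with hA0
    set A1 : Set ℕ := Set.range (fun k => Nat.nth p (2 * k + 1)) with hA1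
    have hA0sub : A0 ⊆ A := by rintro _ ⟨k, rfl⟩; exact Nat.nth_mem_of_infinite hpinf _
    have hA1sub : A1 ⊆ A := by rintro _ ⟨k, rfl⟩; exact Nat.nth_mem_of_infinite hpinf _
    have hA0inf : A0.Infinite :=
      Set.infinite_range_of_injective (fun i j hij => by
        have := hsm.injective hij; omega)
    have hA1inf : A1.Infinite :=
      Set.infinite_range_of_injective (fun i j hij => by
        have := hsm.injective hij; omega)
    have hdisj : A1 ∩ A0 = ∅ := by
      ext n; simp only [Set.mem_inter_iff, Set.mem_empty_iff_false, iff_false]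
      rintro ⟨⟨i, hi⟩, ⟨j, hj⟩⟩
      have := hsm.injective (hi.trans hj.symm); omega
    rcases (hyperfilter ℕ).mem_or_compl_mem A0 with h0 | h0
    · have := ha (chi A0) ⟨A0, h0, rfl⟩
      have hsub : A1 ⊆ {n | a n = true ∧ ¬ chi A0 n = true} := by
        intro n hn
        refine ⟨hA1sub hn, fun hc => ?_⟩
        have : n ∈ A1 ∩ A0 := ⟨hn, chi_eq_true.1 hc⟩
        simp [hdisj] at this
      exact (hA1inf.mono hsub) this
    · have := ha (chi A0ᶜ) ⟨A0ᶜ, h0, rfl⟩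
      have hsub : A0 ⊆ {n | a n = true ∧ ¬ chi A0ᶜ n = true} := by
        intro n hn
        refine ⟨hA0sub hn, fun hc => ?_⟩
        exact (chi_eq_true.1 hc) hn
      exact (hA0inf.mono hsub) this

lemma frp_set_nonempty :
    {c | ∃ S : Set CantorSp, Centered S ∧ ¬ HasPseudointersection S ∧ #S = c}.Nonempty := by
  obtain ⟨S, h1, h2⟩ := exists_centered_no_pseudo
  exact ⟨#S, S, h1, h2, rfl⟩

/-- Any centered family of size < frp has a pseudointersection. -/
lemma has_pseudo_of_lt_frp {S : Set CantorSp} (hc : Centered S) (hs : #S < frp) :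
    HasPseudointersection S := by
  by_contra h
  have : frp ≤ #S := csInf_le (OrderBot.bddBelow _) (Set.mem_setOf.2 ⟨S, hc, h, rfl⟩)
  exact absurd this (not_le.2 hs)

lemma aleph0_le_frp : ℵ₀ ≤ frp := by
  classical
  refine le_csInf frp_set_nonempty ?_
  rintro c ⟨S, hcent, hnp, rfl⟩
  by_contra hlt
  have hfin : S.Finite := Cardinal.lt_aleph0_iff_set_finite.1 (not_le.1 hlt)
  apply hnp
  have hinf := hcent.2 hfin.toFinset (by simp)
  refine ⟨chi {n | ∀ x ∈ hfin.toFinset, x n = true}, chi_mem_CInf hinf, ?_⟩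
  intro s hs
  have : {n | chi {n | ∀ x ∈ hfin.toFinset, x n = true} n = true ∧ ¬ s n = true} = ∅ := by
    ext n
    simp only [Set.mem_setOf_eq, Set.mem_empty_iff_false, iff_false, not_and, not_not]
    intro hn
    exact chi_eq_true.1 hn s (hfin.mem_toFinset.2 hs)
  rw [SubStar, this]; exact Set.finite_empty


/-- truncation: erase coordinates below `k`. -/
def drop (s : CantorSp) (k : ℕ) : CantorSp := fun n => if n < k then false else s n

lemma drop_zero (s : CantorSp) : drop s 0 = s := by
  funext n; simp [drop]

lemma setOf_drop (s : CantorSp) (k : ℕ) :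
    {n | drop s k n = true} = {n | s n = true} \ {n | n < k} := by
  ext n; by_cases h : n < k
  · simp [drop, h]
  · simp [drop, h, Nat.le_of_not_lt h]

lemma part_i : ∃ X : Set CantorSp, #X = frp ∧ ¬ OmegaGammaSet ↥X := by
  classical
  obtain ⟨S, hcent, hnp, hcS⟩ : ∃ S : Set CantorSp,
      Centered S ∧ ¬ HasPseudointersection S ∧ #S = frp :=
    csInf_mem frp_set_nonempty
  set X : Set CantorSp := {y | ∃ s ∈ S, ∃ k : ℕ, y = drop s k} with hX
  have hSX : S ⊆ X := fun s hs => ⟨s, hs, 0, (drop_zero s).symm⟩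
  have hXmem : ∀ s ∈ S, ∀ k : ℕ, drop s k ∈ X := fun s hs k => ⟨s, hs, k, rfl⟩
  -- X is centered
  have hXcent : Centered X := by
    constructor
    · rintro y ⟨s, hs, k, rfl⟩
      have hsinf : {n | s n = true}.Infinite := hcent.1 hs
      rw [CInf, Set.mem_setOf_eq, setOf_drop]
      exact hsinf.diff (Set.finite_Iio k)
    · intro F hF
      have h : ∀ a ∈ F, ∃ s ∈ S, ∃ k : ℕ, a = drop s k := fun a ha => hF ha
      choose! g hg1 k hk using h
      set K : ℕ := F.sup k with hK
      set G : Finset CantorSp := F.image g with hG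
      have hGS : ↑G ⊆ S := by
        intro x hx
        simp only [hG, Finset.coe_image, Set.mem_image, Finset.mem_coe] at hx
        obtain ⟨a, ha, rfl⟩ := hx
        exact hg1 a ha
      have hinf := hcent.2 G hGS
      have hsub : {n | ∀ x ∈ G, x n = true} \ {n | n < K} ⊆ {n | ∀ x ∈ F, x n = true} := by
        rintro n ⟨hn1, hn2⟩ a ha
        rw [hk a ha]
        have : g a n = true := hn1 (g a) (Finset.mem_image_of_mem g ha)
        simp only [drop]
        rw [if_neg, this]
        simp only [Set.mem_setOf_eq, not_lt] at hn2
        exact not_lt.2 (le_trans (Finset.le_sup ha) hn2)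
      exact ((hinf.diff (Set.finite_Iio K)).mono hsub)
  -- X has no pseudointersection (since S ⊆ X)
  have hXnp : ¬ HasPseudointersection X := by
    rintro ⟨a, ha1, ha2⟩
    exact hnp ⟨a, ha1, fun s hs => ha2 s (hSX hs)⟩
  -- cardinality of X
  have hXcard : #X = frp := by
    refine le_antisymm ?_ (csInf_le (OrderBot.bddBelow _) ⟨X, hXcent, hXnp, rfl⟩)
    have hsub : X ⊆ Set.range (fun p : ↥S × ℕ => drop (p.1 : CantorSp) p.2) := by
      rintro y ⟨s, hs, k, rfl⟩
      exact ⟨(⟨s, hs⟩, k), rfl⟩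
    calc #X ≤ #(Set.range (fun p : ↥S × ℕ => drop (p.1 : CantorSp) p.2)) :=
            Cardinal.mk_le_mk_of_subset hsub
      _ ≤ #(↥S × ℕ) := Cardinal.mk_range_le
      _ = #S * ℵ₀ := by simp [Cardinal.mk_prod]
      _ = frp := by
            rw [hcS]
            exact Cardinal.mul_eq_left aleph0_le_frp aleph0_le_frp Cardinal.aleph0_ne_zero
  refine ⟨X, hXcard, ?_⟩
  -- the ω-cover {V n}
  intro hγ
  set V : ℕ → Set ↥X := fun n => {x : ↥X | (x : CantorSp) n = true} with hV
  have hVopen : ∀ n, IsOpen (V n) := by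
    intro n
    have : Continuous (fun x : ↥X => (x : CantorSp) n) :=
      (continuous_apply n).comp continuous_subtype_val
    exact this.isOpen_preimage {true} (isOpen_discrete _)
  have hSne : S.Nonempty := by
    rcases Set.eq_empty_or_nonempty S with h | h
    · exfalso
      have h0 : #S = 0 := by simp [h]
      have := aleph0_le_frp
      rw [← hcS, h0] at this
      exact absurd (le_antisymm (this.trans le_rfl) zero_le) Cardinal.aleph0_ne_zero
    · exact h
  obtain ⟨s₀, hs₀⟩ := hSne
  have hcover : OmegaCover (Set.range V) := by
    refine ⟨by rintro _ ⟨n, rfl⟩; exact hVopen n, ?_, ?_⟩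
    · rintro _ ⟨n, rfl⟩ h
      have hx : drop s₀ (n + 1) ∈ X := hXmem s₀ hs₀ (n + 1)
      have : (⟨drop s₀ (n+1), hx⟩ : ↥X) ∈ V n := h ▸ Set.mem_univ _
      simp only [hV, Set.mem_setOf_eq, drop] at this
      rw [if_pos (Nat.lt_succ_self n)] at this
      exact Bool.false_ne_true this
    · intro F
      set F' : Finset CantorSp := F.image Subtype.val with hF'
      have hF'X : ↑F' ⊆ X := by
        intro y hy
        rw [hF', Finset.coe_image] at hy
        obtain ⟨a, _, rfl⟩ := hy
        exact a.2
      obtain ⟨n, hn⟩ := (hXcent.2 F' hF'X).nonempty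
      refine ⟨V n, ⟨n, rfl⟩, fun x hx => ?_⟩
      exact hn (x : CantorSp) (Finset.mem_image_of_mem _ (Finset.mem_coe.1 hx))
  obtain ⟨𝒱, h𝒱sub, h𝒱open, h𝒱inf, h𝒱pc⟩ := hγ (Set.range V) hcover
  -- extract a pseudointersection, contradiction
  have hsel : ∀ W : ↥𝒱, ∃ n : ℕ, V n = (W : Set ↥X) := fun W => h𝒱sub W.2
  choose g hg using hsel
  have hginj : Function.Injective g := by
    intro W W' h
    have : (W : Set ↥X) = (W' : Set ↥X) := by rw [← hg W, ← hg W', h]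
    exact Subtype.ext this
  have : 𝒱.Infinite := h𝒱inf
  have h𝒱I : Infinite ↥𝒱 := this.to_subtype
  set A : Set ℕ := Set.range g with hA
  have hAinf : A.Infinite := Set.infinite_range_of_injective hginj
  apply hXnp
  refine ⟨chi A, chi_mem_CInf hAinf, ?_⟩
  intro s hs
  set sX : ↥X := ⟨s, hs⟩ with hsX
  have hfin := h𝒱pc sX
  have hmap : {n | chi A n = true ∧ ¬ s n = true} ⊆
      g '' {W : ↥𝒱 | sX ∉ (W : Set ↥X)} := by
    rintro n ⟨hn1, hn2⟩
    obtain ⟨W, rfl⟩ := chi_eq_true.1 hn1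
    refine ⟨W, ?_, rfl⟩
    simp only [Set.mem_setOf_eq]
    intro hmem
    rw [← hg W] at hmem
    exact hn2 hmem
  refine Set.Finite.subset ?_ hmap
  apply Set.Finite.image
  have : {W : ↥𝒱 | sX ∉ (W : Set ↥X)} ⊆ Subtype.val ⁻¹' {U ∈ 𝒱 | sX ∉ U} := by
    intro W hW
    exact ⟨W.2, hW⟩
  exact Set.Finite.subset (hfin.preimage (Subtype.val_injective.injOn)) this


lemma part_ii (X : Set CantorSp) (hX : #X < frp) : OmegaGammaSet ↥X := by
  classical
  intro 𝒰 h𝒰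
  obtain ⟨hopen, hneU, homega⟩ := h𝒰
  -- X is infinite
  have hXinf : X.Infinite := by
    by_contra hfin
    have hfin : X.Finite := Set.not_infinite.1 hfin
    haveI := hfin.fintype
    obtain ⟨U, hU, hsub⟩ := homega (Finset.univ : Finset ↥X)
    apply hneU U hU
    apply Set.eq_univ_of_univ_subset
    intro x _
    exact hsub (by simp)
  haveI hXI : Infinite ↥X := hXinf.to_subtype
  -- countable basis and countable refinement of the ω-cover
  obtain ⟨b, hbc, -, hbbasis⟩ := TopologicalSpace.exists_countable_basis ↥X
  set I : Set (Finset (Set ↥X)) := {𝒷 | ↑𝒷 ⊆ b ∧ ∃ W ∈ 𝒰, ⋃₀ ↑𝒷 ⊆ W} with hI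
  have hIc : I.Countable := by
    have h2 : (((↑) : Finset (Set ↥X) → Set (Set ↥X)) ⁻¹' {t : Set (Set ↥X) | t.Finite ∧ t ⊆ b}).Countable :=
      (Set.countable_setOf_finite_subset hbc).preimage Finset.coe_injective
    refine Set.Countable.mono ?_ h2
    intro 𝒷 h
    exact ⟨𝒷.finite_toSet, h.1⟩
  have hselE : ∀ 𝒷 ∈ I, ∃ W ∈ 𝒰, ⋃₀ ↑𝒷 ⊆ W := fun _ h => h.2
  choose! sel hsel1 hsel2 using hselE
  set 𝒰₀ : Set (Set ↥X) := sel '' I with h𝒰₀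
  have h𝒰₀sub : 𝒰₀ ⊆ 𝒰 := by rintro _ ⟨𝒷, h𝒷, rfl⟩; exact hsel1 𝒷 h𝒷
  have h𝒰₀c : 𝒰₀.Countable := hIc.image _
  -- 𝒰₀ is still witnesses the ω-cover property
  have h𝒰₀ω : ∀ F : Finset ↥X, ∃ W ∈ 𝒰₀, ↑F ⊆ W := by
    intro F
    obtain ⟨U, hU, hFU⟩ := homega F
    have hv : ∀ x : ↥X, ∃ v, x ∈ F → v ∈ b ∧ x ∈ v ∧ v ⊆ U := by
      intro x
      by_cases hx : x ∈ F
      · obtain ⟨v, hv1, hv2, hv3⟩ :=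
          hbbasis.exists_subset_of_mem_open (hFU (Finset.mem_coe.2 hx)) (hopen U hU)
        exact ⟨v, fun _ => ⟨hv1, hv2, hv3⟩⟩
      · exact ⟨∅, fun h => absurd h hx⟩
    choose v hv using hv
    set 𝒷 : Finset (Set ↥X) := F.image v with h𝒷
    have h𝒷I : 𝒷 ∈ I := by
      refine ⟨?_, U, hU, ?_⟩
      · rw [h𝒷, Finset.coe_image]
        rintro _ ⟨x, hx, rfl⟩
        exact (hv x (Finset.mem_coe.1 hx)).1
      · rw [h𝒷, Finset.coe_image]
        rintro y ⟨_, ⟨x, hx, rfl⟩, hy⟩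
        exact (hv x (Finset.mem_coe.1 hx)).2.2 hy
    refine ⟨sel 𝒷, ⟨𝒷, h𝒷I, rfl⟩, ?_⟩
    intro x hx
    apply hsel2 𝒷 h𝒷I
    exact ⟨v x, by
      rw [h𝒷, Finset.coe_image]
      exact ⟨x, hx, rfl⟩, (hv x (Finset.mem_coe.1 hx)).2.1⟩
  -- 𝒰₀ is infinite
  have h𝒰₀inf : 𝒰₀.Infinite := by
    by_contra hfin
    have hfin : 𝒰₀.Finite := Set.not_infinite.1 hfin
    have hxW : ∀ W : Set ↥X, ∃ x : ↥X, W ∈ 𝒰₀ → x ∉ W := by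
      intro W
      by_cases hW : W ∈ 𝒰₀
      · obtain ⟨x, hx⟩ := Set.ne_univ_iff_exists_notMem W |>.1 (hneU W (h𝒰₀sub hW))
        exact ⟨x, fun _ => hx⟩
      · exact ⟨Classical.arbitrary ↥X, fun h => absurd h hW⟩
    choose xW hxW using hxW
    obtain ⟨W, hW, hGW⟩ := h𝒰₀ω (hfin.toFinset.image xW)
    apply hxW W hW
    apply hGW
    rw [Finset.coe_image]
    exact ⟨W, by rwa [Set.Finite.coe_toFinset], rfl⟩
  -- enumerate 𝒰₀ injectively
  haveI := h𝒰₀c.to_subtype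
  haveI := h𝒰₀inf.to_subtype
  obtain ⟨e⟩ : Nonempty (↥𝒰₀ ≃ ℕ) := nonempty_equiv_of_countable
  set U : ℕ → Set ↥X := fun n => ((e.symm n : ↥𝒰₀) : Set ↥X) with hUdef
  have hUinj : Function.Injective U := by
    intro m n h
    have := Subtype.ext h (a1 := e.symm m) (a2 := e.symm n)
    exact e.symm.injective this
  have hUmem : ∀ n, U n ∈ 𝒰₀ := fun n => (e.symm n).2
  have hUsurj : ∀ W ∈ 𝒰₀, ∃ n, U n = W := by
    intro W hW
    exact ⟨e ⟨W, hW⟩, by simp [hUdef]⟩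
  -- the centered family
  set A : Finset ↥X → Set ℕ := fun F => {n | ↑F ⊆ U n} with hAdef
  have hAinf : ∀ F, (A F).Infinite := by
    intro F
    by_contra hfin
    have hfin : (A F).Finite := Set.not_infinite.1 hfin
    have hxp : ∀ n : ℕ, ∃ x : ↥X, x ∉ U n := by
      intro n
      exact Set.ne_univ_iff_exists_notMem (U n) |>.1 (hneU _ (h𝒰₀sub (hUmem n)))
    choose xp hxp using hxp
    obtain ⟨W, hW, hGW⟩ := h𝒰₀ω (F ∪ hfin.toFinset.image xp)
    obtain ⟨m, rfl⟩ := hUsurj W hW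
    have hmA : m ∈ A F := by
      intro x hx
      exact hGW (Finset.mem_coe.2 (Finset.mem_union_left _ (Finset.mem_coe.1 hx)))
    apply hxp m
    apply hGW
    rw [Finset.coe_union, Finset.coe_image]
    exact Or.inr ⟨m, by rwa [Set.Finite.coe_toFinset], rfl⟩
  set 𝒜 : Set CantorSp := Set.range (fun F : Finset ↥X => chi (A F)) with h𝒜
  have h𝒜cent : Centered 𝒜 := by
    constructor
    · rintro _ ⟨F, rfl⟩
      exact chi_mem_CInf (hAinf F)
    · intro G hG
      have h : ∀ a ∈ G, ∃ F : Finset ↥X, chi (A F) = a := fun a ha => hG ha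
      choose! g hg using h
      set Fbig : Finset ↥X := G.sup g with hFbig
      refine (hAinf Fbig).mono ?_
      intro n hn a ha
      rw [← hg a ha]
      refine chi_eq_true.2 ?_
      intro x hx
      exact hn (Finset.mem_coe.2 (Finset.mem_of_subset (Finset.le_sup ha) (Finset.mem_coe.1 hx)))
  have h𝒜card : #𝒜 < frp := by
    calc #𝒜 ≤ #(Finset ↥X) := Cardinal.mk_range_le
      _ = #↥X := Cardinal.mk_finset_of_infinite ↥X
      _ < frp := hX
  obtain ⟨a, haInf, haSub⟩ := has_pseudo_of_lt_frp h𝒜cent h𝒜card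
  set Aset : Set ℕ := {n | a n = true} with hAset
  have hAsetInf : Aset.Infinite := haInf
  refine ⟨U '' Aset, ?_, ?_, ?_, ?_⟩
  · rintro _ ⟨n, _, rfl⟩
    exact h𝒰₀sub (hUmem n)
  · rintro _ ⟨n, _, rfl⟩
    exact hopen _ (h𝒰₀sub (hUmem n))
  · exact hAsetInf.image hUinj.injOn
  · intro x
    have hfin := haSub (chi (A {x})) ⟨{x}, rfl⟩
    refine Set.Finite.subset (hfin.image U) ?_
    rintro W ⟨⟨n, hn, rfl⟩, hx⟩
    refine ⟨n, ⟨hn, ?_⟩, rfl⟩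
    rw [Bool.not_eq_true, ← Bool.not_eq_true]
    intro hc
    apply hx
    exact chi_eq_true.1 hc (by simp)


/-- The minimal cardinality of a subset of the Cantor space that is not an
ω-γ set equals `𝔭`. -/
theorem stmt13 :
    (∃ X : Set CantorSp, #X = frp ∧ ¬ OmegaGammaSet ↥X) ∧
    (∀ X : Set CantorSp, #X < frp → OmegaGammaSet ↥X) := by
  exact ⟨part_i, part_ii⟩
end OmissionOfIntervals
end

section
/- Let X be an infinite Hausdorff topological space. Then X is an ω-γ set (every open ω-cover of X has a point-cofinite subcover) if and only if X satisfies S1(Ω,Γ): for every sequence (U_n) of open ω-covers of X one can choose U_n ∈ U_n such that every point of X belongs to U_n for all but finitely many n. -/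
open Set Filter Cardinal

namespace OmissionOfIntervals

/-- An infinite Hausdorff space is an ω-γ set iff it satisfies `S1(Ω,Γ)`. -/
theorem stmt14 (X : Type*) [TopologicalSpace X] [T2Space X] [Infinite X] :
    OmegaGammaSet X ↔ S1OmegaGamma X := by
  classical
  constructor
  · -- hard direction: ω-γ set → S1(Ω,Γ)
    intro hγ 𝒰 h𝒰
    obtain ⟨a, ha⟩ : ∃ a : ℕ → X, Function.Injective a :=
      ⟨Infinite.natEmbedding X, (Infinite.natEmbedding X).injective⟩
    set P : Set X → ℕ → Prop := fun V m =>
      ∃ U : ℕ → Set X, (∀ i ≤ m, U i ∈ 𝒰 i) ∧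
        V = (⋂ i ∈ Finset.range (m + 1), U i) \ {a (m + 1)} with hPdef
    set 𝒱 : Set (Set X) := {V | ∃ m, P V m} with h𝒱def
    have h𝒱cov : OmegaCover 𝒱 := by
      refine ⟨?_, ?_, ?_⟩
      · rintro V ⟨m, U, hU, rfl⟩
        exact IsOpen.sdiff
          (isOpen_biInter_finset fun i hi =>
            (h𝒰 i).1 _ (hU i (Nat.lt_succ_iff.mp (Finset.mem_range.mp hi))))
          isClosed_singleton
      · rintro V ⟨m, U, hU, rfl⟩ h
        have : a (m + 1) ∈ ((⋂ i ∈ Finset.range (m + 1), U i) \ {a (m + 1)}) :=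
          h ▸ mem_univ _
        exact this.2 rfl
      · intro F
        have hfin : {i : ℕ | a (i + 1) ∈ (F : Set X)}.Finite := by
          have hsub : {i : ℕ | a (i + 1) ∈ (F : Set X)} ⊆ (fun i => a (i + 1)) ⁻¹' ↑F :=
            fun i hi => hi
          exact (F.finite_toSet.preimage
            (Function.Injective.injOn (fun i j h => Nat.succ_injective (ha h)))).subset hsub
        obtain ⟨n, hn⟩ := hfin.infinite_compl.nonempty
        have hWex : ∀ i : ℕ, ∃ U ∈ 𝒰 i, (F : Set X) ⊆ U := fun i => (h𝒰 i).2.2 F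
        choose W hW1 hW2 using hWex
        refine ⟨(⋂ i ∈ Finset.range (n + 1), W i) \ {a (n + 1)},
          ⟨n, W, fun i _ => hW1 i, rfl⟩, fun x hx => ⟨?_, ?_⟩⟩
        · exact Set.mem_biInter fun i _ => hW2 i hx
        · intro hxa
          rw [mem_singleton_iff] at hxa
          exact hn (show a (n + 1) ∈ (F : Set X) from hxa ▸ hx)
    obtain ⟨𝒱', h𝒱'sub, h𝒱'pc⟩ := hγ 𝒱 h𝒱cov
    set nV : Set X → ℕ := fun V => sInf {m | P V m} with hnVdef
    have hnVspec : ∀ V ∈ 𝒱, P V (nV V) := fun V hV => Nat.sInf_mem hV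
    have hkey : ∀ n : ℕ, {V ∈ 𝒱' | nV V < n}.Finite := by
      intro n
      have hsub : {V ∈ 𝒱' | nV V < n} ⊆
          ⋃ j ∈ Finset.range n, {V ∈ 𝒱' | a (j + 1) ∉ V} := by
        rintro V ⟨hV', hlt⟩
        obtain ⟨U, hU, hVeq⟩ := hnVspec V (h𝒱'sub hV')
        refine mem_biUnion (Finset.mem_range.mpr hlt) ⟨hV', ?_⟩
        exact fun hmem => ((Set.ext_iff.mp hVeq (a (nV V + 1))).mp hmem).2 rfl
      exact (Set.Finite.biUnion (Finset.range n).finite_toSet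
        (fun j _ => h𝒱'pc.2.2 (a (j + 1)))).subset hsub
    have hVn : ∀ n : ℕ, ∃ V ∈ 𝒱', n ≤ nV V := by
      intro n
      obtain ⟨V, hV⟩ := (h𝒱'pc.2.1.diff (hkey n)).nonempty
      exact ⟨V, hV.1, not_lt.mp fun h => hV.2 ⟨hV.1, h⟩⟩
    choose V hV𝒱' hVle using hVn
    have hWw : ∀ n, P (V n) (nV (V n)) := fun n => hnVspec _ (h𝒱'sub (hV𝒱' n))
    choose W hW1 hW2 using hWw
    refine ⟨fun n => W n n, fun n => hW1 n n (hVle n), ?_⟩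
    intro x
    have hBfin : {V' ∈ 𝒱' | x ∉ V'}.Finite := h𝒱'pc.2.2 x
    obtain ⟨M, hM⟩ := (hBfin.image nV).bddAbove
    rw [Filter.eventually_atTop]
    refine ⟨M + 1, fun n hn => ?_⟩
    have hxV : x ∈ V n := by
      by_contra hx
      have h1 : nV (V n) ≤ M := hM (mem_image_of_mem nV ⟨hV𝒱' n, hx⟩)
      have h2 := hVle n
      omega
    rw [hW2 n] at hxV
    exact Set.mem_iInter₂.mp hxV.1 n (Finset.mem_range.mpr (Nat.lt_succ_of_le (hVle n)))
  · -- easy direction: S1(Ω,Γ) → ω-γ set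
    intro h 𝒰 hc
    obtain ⟨U, hU, hx⟩ := h (fun _ => 𝒰) (fun _ => hc)
    have hcof : ∀ y : X, {n : ℕ | y ∉ U n}.Finite := by
      intro y
      have hy := hx y
      rw [← Nat.cofinite_eq_atTop, Filter.eventually_cofinite] at hy
      exact hy
    refine ⟨range U, range_subset_iff.mpr hU, ?_, ?_, ?_⟩
    · rintro V ⟨n, rfl⟩
      exact hc.1 _ (hU n)
    · intro hfin
      have hfib : ∃ V ∈ range U, {n : ℕ | U n = V}.Infinite := by
        by_contra hcon
        push_neg at hcon
        have huniv : (Set.univ : Set ℕ).Finite :=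
          ((hfin.biUnion (fun V hV => hcon V hV)).subset
            (fun n _ => mem_biUnion (⟨n, rfl⟩ : U n ∈ range U) rfl))
        exact Set.infinite_univ huniv
      obtain ⟨V, ⟨k, hk⟩, hVinf⟩ := hfib
      have hVuniv : V = Set.univ := by
        ext y
        simp only [mem_univ, iff_true]
        obtain ⟨n, hn⟩ := (hVinf.diff (hcof y)).nonempty
        have : y ∈ U n := not_not.mp hn.2
        exact hn.1 ▸ this
      exact hc.2.1 V (hk ▸ hU k) hVuniv
    · intro y
      refine ((hcof y).image U).subset ?_
      rintro W ⟨⟨n, rfl⟩, hW⟩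
      exact ⟨n, hW, rfl⟩
end OmissionOfIntervals
end

section
/- Let X ⊆ 𝒫(ℕ) with Fin ⊆ X, and let U be a family of open subsets of the Cantor space 𝒫(ℕ) that is an ω-cover of X. Then there exist a strictly increasing function a : ℕ → ℕ with a(1) = 1 and pairwise distinct sets U_1, U_2, … ∈ U such that for each n, every point x ∈ 𝒫(ℕ) with x ∩ (a(n), a(n+1)) = ∅ (x contains no integer strictly between a(n) and a(n+1)) belongs to U_n. -/
open Set Filter Cardinal

namespace OmissionOfIntervals

lemma finite_smallSupp (m : ℕ) : {x : CantorSp | ∀ k, m < k → x k = false}.Finite := by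
  have hsub : {x : CantorSp | ∀ k, m < k → x k = false} ⊆
      Set.range (fun v : Fin (m+1) → Bool =>
        (fun k => if h : k < m + 1 then v ⟨k, h⟩ else false : CantorSp)) := by
    intro x hx
    refine ⟨fun i => x i, ?_⟩
    funext k
    by_cases h : k < m + 1
    · simp [h]
    · simp only [h, dif_neg, not_false_iff]
      exact (hx k (by omega)).symm
  exact (Set.finite_range _).subset hsub

lemma open_nbhd (U : Set CantorSp) (hU : IsOpen U) (x : CantorSp) (hx : x ∈ U) :
    ∃ N, ∀ y : CantorSp, (∀ k, k < N → y k = x k) → y ∈ U := by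
  obtain ⟨I, u, hu, hsub⟩ := isOpen_pi_iff.mp hU x hx
  refine ⟨(I.sup id) + 1, fun y hy => hsub ?_⟩
  intro i hi
  have : y i = x i := hy i (Nat.lt_succ_of_le (Finset.le_sup (f := id) hi))
  rw [this]
  exact (hu i hi).2

lemma key_step (X : Set CantorSp) (hX : CFin ⊆ X)
    (𝒰 : Set (Set CantorSp)) (h𝒰 : OmegaCoverOf 𝒰 X)
    (m : ℕ) (G : Finset CantorSp) (hG : ↑G ⊆ X) :
    ∃ p : Set CantorSp × ℕ, p.1 ∈ 𝒰 ∧ m < p.2 ∧ ↑G ⊆ p.1 ∧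
      ∀ x : CantorSp, (∀ k, m < k → k < p.2 → x k = false) → x ∈ p.1 := by
  classical
  obtain ⟨hopen, _, hfin⟩ := h𝒰
  set F : Finset CantorSp := (finite_smallSupp m).toFinset with hF
  have hFX : (F : Set CantorSp) ⊆ X := by
    intro x hx
    apply hX
    have hx' : ∀ k, m < k → x k = false := by
      simpa [hF, Set.Finite.mem_toFinset] using hx
    have : {n | x n = true} ⊆ Set.Iic m := by
      intro n hn
      by_contra h
      have := hx' n (by simpa using h)
      simp [this] at hn
    exact (Set.finite_Iic m).subset this
  obtain ⟨U, hU𝒰, hUsub⟩ := hfin (F ∪ G) (by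
    intro x hx
    rcases Finset.mem_union.mp (by exact_mod_cast hx) with h | h
    · exact hFX h
    · exact hG h)
  have hUopen : IsOpen U := hopen U hU𝒰
  have h1 : ∀ x ∈ F, ∃ N, ∀ y : CantorSp, (∀ k, k < N → y k = x k) → y ∈ U := by
    intro x hx
    exact open_nbhd U hUopen x (hUsub (by exact_mod_cast Finset.mem_union_left G hx))
  choose! N hN using h1
  refine ⟨(U, m + 1 + F.sup N), hU𝒰, by omega, ?_, ?_⟩
  · intro x hx
    exact hUsub (by exact_mod_cast Finset.mem_union_right F (by exact_mod_cast hx))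
  · intro x hx
    set x' : CantorSp := fun k => if k ≤ m then x k else false with hx'
    have hx'F : x' ∈ F := by
      simp only [hF, Set.Finite.mem_toFinset, Set.mem_setOf_eq]
      intro k hk
      simp [hx', Nat.not_le.mpr hk]
    have hNle : N x' ≤ m + 1 + F.sup N :=
      le_trans (Finset.le_sup hx'F) (by omega)
    have : x ∈ U := by
      apply hN x' hx'F x
      intro k hk
      by_cases h : k ≤ m
      · simp [hx', h]
      · have hmk : m < k := Nat.not_le.mp h
        rw [hx k hmk (lt_of_lt_of_le hk hNle)]
        simp [hx', h]
    exact this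

/-- Galvin–Miller: For `Fin ⊆ X ⊆ 𝒫(ℕ)` and an open ω-cover `𝒰` of `X` by
open subsets of the Cantor space, there are a strictly increasing `a : ℕ → ℕ` with
`a 1 = 1` and pairwise distinct `U₁, U₂, … ∈ 𝒰` such that for each `n ≥ 1`, every
`x ∈ 𝒫(ℕ)` omitting the open interval `(a n, a (n+1))` belongs to `U n`. -/
theorem stmt15 (X : Set CantorSp) (hX : CFin ⊆ X)
    (𝒰 : Set (Set CantorSp)) (h𝒰 : OmegaCoverOf 𝒰 X) :
    ∃ a : ℕ → ℕ, StrictMono a ∧ a 1 = 1 ∧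
      ∃ U : ℕ → Set CantorSp,
        (∀ n, 1 ≤ n → U n ∈ 𝒰) ∧
        (∀ m n, 1 ≤ m → 1 ≤ n → U m = U n → m = n) ∧
        ∀ n, 1 ≤ n → ∀ x : CantorSp,
          (∀ k, a n < k → k < a (n + 1) → x k = false) → x ∈ U n := by
  classical
  have hnotsub : ∀ V ∈ 𝒰, ∃ x ∈ X, x ∉ V := by
    intro V hV
    exact Set.not_subset.mp (h𝒰.2.1 V hV)
  -- witness function
  have hXne : (fun _ => false : CantorSp) ∈ X := hX (by simp [CFin])
  let w : Set CantorSp → CantorSp := fun V =>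
    if h : ∃ x ∈ X, x ∉ V then h.choose else (fun _ => false)
  have hw1 : ∀ V, w V ∈ X := by
    intro V
    by_cases h : ∃ x ∈ X, x ∉ V
    · simp only [w, dif_pos h]; exact h.choose_spec.1
    · simp only [w, dif_neg h]; exact hXne
  have hw2 : ∀ V ∈ 𝒰, w V ∉ V := by
    intro V hV
    have h : ∃ x ∈ X, x ∉ V := hnotsub V hV
    simp only [w, dif_pos h]
    exact h.choose_spec.2
  -- one-step choice
  have hGX : ∀ L : List (Set CantorSp), ((L.map w).toFinset : Set CantorSp) ⊆ X := by
    intro L x hx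
    simp only [List.coe_toFinset, List.mem_map, Set.mem_setOf_eq] at hx
    obtain ⟨V, _, rfl⟩ := hx
    exact hw1 V
  let step : ℕ → List (Set CantorSp) → Set CantorSp × ℕ := fun m L =>
    (key_step X hX 𝒰 h𝒰 m (L.map w).toFinset (hGX L)).choose
  have hstep : ∀ m L, (step m L).1 ∈ 𝒰 ∧ m < (step m L).2 ∧
      (((L.map w).toFinset : Finset CantorSp) : Set CantorSp) ⊆ (step m L).1 ∧
      ∀ x : CantorSp, (∀ k, m < k → k < (step m L).2 → x k = false) → x ∈ (step m L).1 :=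
    fun m L => (key_step X hX 𝒰 h𝒰 m (L.map w).toFinset (hGX L)).choose_spec
  -- the recursion
  let s : ℕ → ℕ × List (Set CantorSp) := fun n =>
    Nat.rec ((1 : ℕ), ([] : List (Set CantorSp)))
      (fun _ p => ((step p.1 p.2).2, (step p.1 p.2).1 :: p.2)) n
  have hsS : ∀ n, s (n+1) = ((step (s n).1 (s n).2).2, (step (s n).1 (s n).2).1 :: (s n).2) :=
    fun n => rfl
  let a : ℕ → ℕ := fun n => Nat.rec 0 (fun k _ => (s k).1) n
  have haS : ∀ n, a (n + 1) = (s n).1 := fun n => rfl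
  let U : ℕ → Set CantorSp := fun n => ((s n).2).headI
  have hUS : ∀ n, U (n + 1) = (step (s n).1 (s n).2).1 := by
    intro n
    show (((step (s n).1 (s n).2).1 :: (s n).2).headI) = _
    rfl
  -- strict monotonicity
  have hamono : StrictMono a := by
    apply strictMono_nat_of_lt_succ
    intro n
    cases n with
    | zero => show (0 : ℕ) < 1; norm_num
    | succ k =>
      show (s k).1 < (s (k+1)).1
      rw [hsS]
      exact (hstep (s k).1 (s k).2).2.1
  -- list membership
  have hmem : ∀ n, ∀ i, 1 ≤ i → i ≤ n → U i ∈ (s n).2 := by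
    intro n
    induction n with
    | zero => intro i h1 h2; omega
    | succ k ih =>
      intro i h1 h2
      rcases Nat.lt_or_ge i (k+1) with h | h
      · rw [hsS]
        exact List.mem_cons_of_mem _ (ih i h1 (by omega))
      · have : i = k + 1 := by omega
        subst this
        rw [hsS, hUS]
        exact List.mem_cons_self
  have hU𝒰 : ∀ n, 1 ≤ n → U n ∈ 𝒰 := by
    intro n hn
    obtain ⟨k, rfl⟩ := Nat.exists_eq_add_of_le hn
    rw [add_comm, hUS]
    exact (hstep (s k).1 (s k).2).1
  -- distinctness
  have hne : ∀ i n, 1 ≤ i → i < n → U n ≠ U i := by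
    intro i n h1 h2
    obtain ⟨k, rfl⟩ := Nat.exists_eq_add_of_lt h2
    intro heq
    have hiL : U i ∈ (s (i + k)).2 := hmem (i + k) i h1 (by omega)
    have hwmem : w (U i) ∈ ((((s (i + k)).2.map w).toFinset : Finset CantorSp) : Set CantorSp) := by
      simp only [List.coe_toFinset, List.mem_map, Set.mem_setOf_eq]
      exact ⟨U i, hiL, rfl⟩
    have hin : w (U i) ∈ U (i + k + 1) := by
      rw [hUS]
      exact (hstep (s (i + k)).1 (s (i + k)).2).2.2.1 hwmem
    rw [heq] at hin
    exact hw2 (U i) (hU𝒰 i h1) hin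
  refine ⟨a, hamono, rfl, U, hU𝒰, ?_, ?_⟩
  · intro m n hm hn heq
    rcases lt_trichotomy m n with h | h | h
    · exact absurd heq.symm (hne m n hm h)
    · exact h
    · exact absurd heq (hne n m hn h)
  · intro n hn x hx
    obtain ⟨k, rfl⟩ := Nat.exists_eq_add_of_le hn
    rw [add_comm] at *
    rw [hUS]
    apply (hstep (s k).1 (s k).2).2.2.2
    intro j hj1 hj2
    apply hx j
    · exact hj1
    · show j < (s (k+1)).1
      rw [hsS]
      exact hj2
end OmissionOfIntervals
end

section
/- Let X be a topological space and X = ⋃_n X_n an increasing union (X_1 ⊆ X_2 ⊆ ⋯) of subspaces, each of which satisfies S1(Γ,Γ). For each n, let U_n be a family of open subsets of X that is a point-cofinite cover of X_n (U_n is infinite, no member of U_n contains X_n, and every point of X_n belongs to all but finitely many members of U_n). Then there are sets U_n ∈ U_n such that every point of X belongs to U_n for all but finitely many n. -/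
open Set Filter Cardinal

namespace OmissionOfIntervals

private lemma stageExists {X : Type*} [TopologicalSpace X] (P : Set X)
    (hP : S1GammaGamma ↥P) (D : ℕ → Set (Set X))
    (hop : ∀ n, ∀ V ∈ D n, IsOpen V)
    (hinf : ∀ n, (D n).Infinite)
    (hpcP : ∀ n, ∀ x ∈ P, {V ∈ D n | x ∉ V}.Finite) :
    ∃ E : ℕ → Set (Set X), (∀ n, E n ⊆ D n) ∧ (∀ n, (E n).Infinite) ∧
      ∀ x ∈ P, {n | ∃ V ∈ E n, x ∉ V}.Finite := by
  classical
  -- If the trace family of a column is finite, infinitely many members contain P.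
  have freeInf : ∀ n, ¬ ((fun V => (Subtype.val ⁻¹' V : Set ↥P)) '' D n).Infinite →
      {V ∈ D n | P ⊆ V}.Infinite := by
    intro n hn
    rw [Set.not_infinite] at hn
    have hfib : ∃ w ∈ (fun V => (Subtype.val ⁻¹' V : Set ↥P)) '' D n,
        {V ∈ D n | (Subtype.val ⁻¹' V : Set ↥P) = w}.Infinite := by
      by_contra hcon
      push_neg at hcon
      have hsub : D n ⊆ ⋃ w ∈ (fun V => (Subtype.val ⁻¹' V : Set ↥P)) '' D n,
          {V ∈ D n | (Subtype.val ⁻¹' V : Set ↥P) = w} := by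
        intro V hV
        exact Set.mem_biUnion (Set.mem_image_of_mem _ hV) ⟨hV, rfl⟩
      exact hinf n
        ((Set.Finite.biUnion hn (fun w hw => hcon w hw)).subset hsub)
    obtain ⟨w, hw, hΦ⟩ := hfib
    have hwuniv : ∀ V, V ∈ D n → (Subtype.val ⁻¹' V : Set ↥P) = w → P ⊆ V := by
      intro V hV htr x hx
      obtain ⟨V', hV'⟩ := (hΦ.diff (hpcP n x hx)).nonempty
      have hxV' : x ∈ V' := by
        by_contra hxV'
        exact hV'.2 ⟨hV'.1.1, hxV'⟩
      have hmem : (⟨x, hx⟩ : ↥P) ∈ w := by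
        rw [← hV'.1.2]; exact hxV'
      rw [← htr] at hmem
      exact hmem
    exact hΦ.mono (fun V hV => ⟨hV.1, hwuniv V hV.1 hV.2⟩)
  by_cases hHon : ∃ n₀, ((fun V => (Subtype.val ⁻¹' V : Set ↥P)) '' D n₀).Infinite
  · obtain ⟨n₀, hn₀⟩ := hHon
    -- injective lifted trace families in honest columns
    have key : ∀ n, ∃ L : ℕ → Set X,
        ((fun V => (Subtype.val ⁻¹' V : Set ↥P)) '' D n).Infinite →
        (∀ r, L r ∈ D n) ∧
          Function.Injective (fun r => (Subtype.val ⁻¹' (L r) : Set ↥P)) := by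
      intro n
      by_cases hn : ((fun V => (Subtype.val ⁻¹' V : Set ↥P)) '' D n).Infinite
      · have e := Set.Infinite.natEmbedding _ hn
        have hmem : ∀ r : ℕ, ∃ V, V ∈ D n ∧
            (Subtype.val ⁻¹' V : Set ↥P) = ((e r : ↥((fun V => (Subtype.val ⁻¹' V : Set ↥P)) '' D n)) :
              Set ↥P) := by
          intro r
          obtain ⟨V, hV, htr⟩ := (e r).2
          exact ⟨V, hV, htr⟩
        choose L hL1 hL2 using hmem
        refine ⟨L, fun _ => ⟨hL1, fun r r' h => ?_⟩⟩
        have h2 : ((e r : _) : Set ↥P) = ((e r' : _) : Set ↥P) := by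
          rw [← hL2 r, ← hL2 r']; exact h
        exact e.injective (Subtype.coe_injective h2)
      · exact ⟨fun _ => ∅, fun h => absurd h hn⟩
    choose L hL using key
    -- the basic point-cofinite families
    have famPC : ∀ n, ((fun V => (Subtype.val ⁻¹' V : Set ↥P)) '' D n).Infinite → ∀ i : ℕ,
        PointCofiniteCover
          (Set.range (fun s : ℕ => (Subtype.val ⁻¹' (L n (Nat.pair i s)) : Set ↥P))) := by
      intro n hn i
      obtain ⟨hL1, hL2⟩ := hL n hn
      refine ⟨?_, ?_, ?_⟩
      · rintro U ⟨s, rfl⟩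
        exact (hop n _ (hL1 _)).preimage continuous_subtype_val
      · apply Set.infinite_range_of_injective
        intro s s' h
        have h3 := congrArg Nat.unpair (hL2 h)
        rw [Nat.unpair_pair, Nat.unpair_pair] at h3
        exact congrArg Prod.snd h3
      · intro x
        refine ((hpcP n x.1 x.2).image (fun V => (Subtype.val ⁻¹' V : Set ↥P))).subset ?_
        rintro U ⟨⟨s, rfl⟩, hxU⟩
        exact ⟨L n (Nat.pair i s), ⟨hL1 _, fun hmem => hxU hmem⟩, rfl⟩
    -- apply S1
    obtain ⟨w, hw1, hw2⟩ := hP (fun j =>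
      if ((fun V => (Subtype.val ⁻¹' V : Set ↥P)) '' D (Nat.unpair j).1).Infinite
      then Set.range (fun s : ℕ =>
        (Subtype.val ⁻¹' (L (Nat.unpair j).1 (Nat.pair (2 * (Nat.unpair j).2) s)) : Set ↥P))
      else Set.range (fun s : ℕ =>
        (Subtype.val ⁻¹' (L n₀ (Nat.pair (2 * j + 1) s)) : Set ↥P)))
      (by
        intro j
        by_cases h : ((fun V => (Subtype.val ⁻¹' V : Set ↥P)) '' D (Nat.unpair j).1).Infinite
        · simp only [if_pos h]; exact famPC _ h _
        · simp only [if_neg h]; exact famPC _ hn₀ _)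
    -- lift the selections at honest slots
    have lift : ∀ n i, ((fun V => (Subtype.val ⁻¹' V : Set ↥P)) '' D n).Infinite →
        ∃ s : ℕ, w (Nat.pair n i) =
          (Subtype.val ⁻¹' (L n (Nat.pair (2 * i) s)) : Set ↥P) := by
      intro n i hn
      have hcond : ((fun V => (Subtype.val ⁻¹' V : Set ↥P)) ''
          D (Nat.unpair (Nat.pair n i)).1).Infinite := by
        rw [Nat.unpair_pair]; exact hn
      have h1 := hw1 (Nat.pair n i)
      rw [if_pos hcond] at h1
      rw [Nat.unpair_pair] at h1
      obtain ⟨s, hs⟩ := h1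
      exact ⟨s, hs.symm⟩
    choose sfun hsfun using lift
    refine ⟨fun n => if h : ((fun V => (Subtype.val ⁻¹' V : Set ↥P)) '' D n).Infinite
        then Set.range (fun i : ℕ => L n (Nat.pair (2 * i) (sfun n i h)))
        else {V ∈ D n | P ⊆ V}, ?_, ?_, ?_⟩
    · intro n
      by_cases h : ((fun V => (Subtype.val ⁻¹' V : Set ↥P)) '' D n).Infinite
      · simp only [dif_pos h]
        rintro V ⟨i, rfl⟩
        exact (hL n h).1 _
      · simp only [dif_neg h]
        exact Set.sep_subset _ _
    · intro n
      by_cases h : ((fun V => (Subtype.val ⁻¹' V : Set ↥P)) '' D n).Infinite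
      · simp only [dif_pos h]
        apply Set.infinite_range_of_injective
        intro i i' hii
        have h3 := (hL n h).2 (congrArg (fun V => (Subtype.val ⁻¹' V : Set ↥P)) hii)
        have h4 := congrArg Nat.unpair h3
        rw [Nat.unpair_pair, Nat.unpair_pair] at h4
        have h5 : 2 * i = 2 * i' := congrArg Prod.fst h4
        omega
      · simp only [dif_neg h]
        exact freeInf n h
    · intro x hx
      obtain ⟨J, hJ⟩ := eventually_atTop.mp (hw2 ⟨x, hx⟩)
      refine ((Set.finite_Iio J).image (fun j => (Nat.unpair j).1)).subset ?_
      rintro n ⟨V, hV, hxV⟩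
      by_cases h : ((fun V => (Subtype.val ⁻¹' V : Set ↥P)) '' D n).Infinite
      · simp only [dif_pos h] at hV
        obtain ⟨i, rfl⟩ := hV
        have hkey := hsfun n i h
        have hnot : (⟨x, hx⟩ : ↥P) ∉ w (Nat.pair n i) := by
          rw [hkey]; exact fun hc => hxV hc
        have hlt : Nat.pair n i < J := by
          by_contra hge
          exact hnot (hJ _ (Nat.le_of_not_lt hge))
        refine ⟨Nat.pair n i, hlt, ?_⟩
        simp [Nat.unpair_pair]
      · simp only [dif_neg h] at hV
        exact absurd (hV.2 hx) hxV
  · push_neg at hHon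
    refine ⟨fun n => {V ∈ D n | P ⊆ V}, fun n => Set.sep_subset _ _,
      fun n => freeInf n (by simpa using hHon n), ?_⟩
    intro x hx
    refine Set.Finite.subset Set.finite_empty ?_
    rintro n ⟨V, hV, hxV⟩
    exact hxV (hV.2 hx)

/-- Jordan: If `X = ⋃ₙ Xₙ` is an increasing union of `S1(Γ,Γ)` subspaces and
each `𝒰 n` is a point-cofinite cover of `Xₙ` by open subsets of `X`, then one may select
`Uₙ ∈ 𝒰 n` with every point of `X` in `Uₙ` for all but finitely many `n`. -/
theorem stmt16 (X : Type*) [TopologicalSpace X] (A : ℕ → Set X)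
    (hmono : ∀ n, A n ⊆ A (n + 1)) (hunion : ⋃ n, A n = Set.univ)
    (hS1 : ∀ n, S1GammaGamma ↥(A n))
    (𝒰 : ℕ → Set (Set X))
    (hopen : ∀ n, ∀ U ∈ 𝒰 n, IsOpen U)
    (hinf : ∀ n, (𝒰 n).Infinite)
    (hntriv : ∀ n, ∀ U ∈ 𝒰 n, ¬ A n ⊆ U)
    (hpc : ∀ n, ∀ x ∈ A n, {U ∈ 𝒰 n | x ∉ U}.Finite) :
    ∃ U : ℕ → Set X, (∀ n, U n ∈ 𝒰 n) ∧ ∀ x : X, ∀ᶠ n in atTop, x ∈ U n := by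
  classical
  have hchain : ∀ {k n : ℕ}, k ≤ n → A k ⊆ A n := by
    intro k n h
    induction h with
    | refl => exact subset_rfl
    | step _ ih => exact ih.trans (hmono _)
  -- one refinement step, certifying the piece `A k` on columns `≥ k`
  have step : ∀ (k : ℕ) (Dk : ℕ → Set (Set X)), (∀ n, Dk n ⊆ 𝒰 n) → (∀ n, (Dk n).Infinite) →
      ∃ D' : ℕ → Set (Set X), (∀ n, D' n ⊆ Dk n) ∧ (∀ n, (D' n).Infinite) ∧
        ∀ x ∈ A k, {n | k ≤ n ∧ ∃ V ∈ D' n, x ∉ V}.Finite := by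
    intro k Dk hsub hinfk
    obtain ⟨E, hE1, hE2, hE3⟩ := stageExists (A k) (hS1 k) (fun m => Dk (k + m))
      (fun m V hV => hopen (k + m) V (hsub _ hV))
      (fun m => hinfk (k + m))
      (fun m x hx =>
        (hpc (k + m) x (hchain (Nat.le_add_right k m) hx)).subset
          (fun V hV => ⟨hsub _ hV.1, hV.2⟩))
    refine ⟨fun n => if n < k then Dk n else E (n - k), ?_, ?_, ?_⟩
    · intro n
      by_cases h : n < k
      · simp only [if_pos h]
        exact subset_rfl
      · simp only [if_neg h]
        intro V hV
        have h2 := hE1 (n - k) hV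
        rwa [Nat.add_sub_cancel' (Nat.le_of_not_lt h)] at h2
    · intro n
      by_cases h : n < k
      · simp only [if_pos h]; exact hinfk n
      · simp only [if_neg h]; exact hE2 _
    · intro x hx
      refine ((hE3 x hx).image (fun m => k + m)).subset ?_
      rintro n ⟨hkn, V, hV, hxV⟩
      simp only [if_neg (Nat.not_lt.mpr hkn)] at hV
      exact ⟨n - k, ⟨V, hV, hxV⟩, Nat.add_sub_cancel' hkn⟩
  choose F hF1 hF2 hF3 using step
  -- the recursive sequence of refinements
  let T : ℕ → {Dk : ℕ → Set (Set X) // (∀ n, Dk n ⊆ 𝒰 n) ∧ (∀ n, (Dk n).Infinite)} :=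
    fun k => Nat.rec ⟨𝒰, fun _ => subset_rfl, hinf⟩
      (fun k prev => ⟨F k prev.1 prev.2.1 prev.2.2,
        fun n => (hF1 k prev.1 prev.2.1 prev.2.2 n).trans (prev.2.1 n),
        hF2 k prev.1 prev.2.1 prev.2.2⟩) k
  have hTval : ∀ k, (T (k + 1)).1 = F k (T k).1 (T k).2.1 (T k).2.2 := fun _ => rfl
  have hTmono : ∀ k n, (T (k + 1)).1 n ⊆ (T k).1 n := by
    intro k n
    rw [hTval k]
    exact hF1 k (T k).1 (T k).2.1 (T k).2.2 n
  have hTle : ∀ k m, k ≤ m → ∀ n, (T m).1 n ⊆ (T k).1 n := by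
    intro k m h
    induction h with
    | refl => exact fun n => subset_rfl
    | step _ ih => exact fun n => (hTmono _ n).trans (ih n)
  have hTcert : ∀ k, ∀ x ∈ A k, {n | k ≤ n ∧ ∃ V ∈ (T (k + 1)).1 n, x ∉ V}.Finite := by
    intro k
    rw [hTval k]
    exact hF3 k (T k).1 (T k).2.1 (T k).2.2
  have hne : ∀ n, ((T (n + 1)).1 n).Nonempty := fun n => ((T (n + 1)).2.2 n).nonempty
  refine ⟨fun n => (hne n).some, fun n => (T (n + 1)).2.1 n (hne n).some_mem, ?_⟩
  intro x
  have hxk : ∃ k, x ∈ A k := by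
    have hxu : x ∈ ⋃ n, A n := by rw [hunion]; exact Set.mem_univ x
    exact Set.mem_iUnion.mp hxu
  obtain ⟨k, hxA⟩ := hxk
  obtain ⟨b, hb⟩ := (hTcert k x hxA).bddAbove
  rw [eventually_atTop]
  refine ⟨max (k + 1) (b + 1), fun n hn => ?_⟩
  have h1 : k + 1 ≤ n := le_trans (le_max_left _ _) hn
  have h2 : b + 1 ≤ n := le_trans (le_max_right _ _) hn
  by_contra hxU
  have hmem : n ∈ {n | k ≤ n ∧ ∃ V ∈ (T (k + 1)).1 n, x ∉ V} :=
    ⟨by omega, (hne n).some, hTle (k + 1) (n + 1) (by omega) n (hne n).some_mem, hxU⟩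
  have := hb hmem
  omega
end OmissionOfIntervals
end

section
/- For each family Y ⊆ [ℕ]^∞ with |Y| < 𝔡 and each a ∈ [ℕ]^∞, there is a set s ∈ [ℕ]^∞ whose complement ℕ ∖ s is also infinite, such that (identifying infinite sets with their increasing enumerations) y(n) ≤ s(n) for infinitely many n, for every y ∈ Y, and a(n) ≤ (ℕ ∖ s)(n) for infinitely many n. -/
open Set Filter Cardinal

namespace OmissionOfIntervals

section Aux

open Classical in
/-- The characteristic function of a set of naturals. -/
noncomputable def mkSet (p : ℕ → Prop) : CantorSp := fun n => decide (p n)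

lemma mkSet_iff {p : ℕ → Prop} {n : ℕ} : mkSet p n = true ↔ p n := by
  simp [mkSet]

lemma strictMono_add_le {F : ℕ → ℕ} (h : StrictMono F) (m k : ℕ) :
    F m + k ≤ F (m + k) := by
  induction k with
  | zero => simp
  | succ k ih =>
    have h1 : F (m + k) < F (m + k + 1) := h (by omega)
    have h2 : m + (k + 1) = m + k + 1 := by omega
    rw [h2]
    omega

lemma sub_mono_of_strictMono {F : ℕ → ℕ} (h : StrictMono F) {m m' : ℕ} (hm : m ≤ m') :
    F m - m ≤ F m' - m' := by
  have h1 := strictMono_add_le h m (m' - m)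
  have h2 : m + (m' - m) = m' := by omega
  have h3 : m ≤ F m := h.le_apply
  rw [h2] at h1
  omega

open Classical in
lemma count_sigma {σ : ℕ → ℕ} (hσ : StrictMono σ) (k : ℕ) :
    Nat.count (fun p => ∃ i, σ i = p) (σ k) = k := by
  classical
  rw [Nat.count_eq_card_filter_range]
  have heq : {x ∈ Finset.range (σ k) | ∃ i, σ i = x} = (Finset.range k).image σ := by
    ext m
    simp only [Finset.mem_filter, Finset.mem_range, Finset.mem_image]
    constructor
    · rintro ⟨hm, i, rfl⟩
      exact ⟨i, hσ.lt_iff_lt.mp hm, rfl⟩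
    · rintro ⟨i, hi, rfl⟩
      exact ⟨hσ hi, i, rfl⟩
  rw [heq, Finset.card_image_of_injective _ hσ.injective, Finset.card_range]

open Classical in
lemma nth_sigma {σ : ℕ → ℕ} (hσ : StrictMono σ) (k : ℕ) :
    Nat.nth (fun p => ∃ i, σ i = p) k = σ k := by
  classical
  have h := Nat.nth_count (p := fun p => ∃ i, σ i = p) (n := σ k) ⟨k, rfl⟩
  rwa [count_sigma hσ] at h

lemma count_bool_not (s : CantorSp) (n : ℕ) :
    Nat.count (fun m => (!s m) = true) n + Nat.count (fun m => s m = true) n = n := by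
  induction n with
  | zero => simp
  | succ n ih =>
    rw [Nat.count_succ, Nat.count_succ]
    by_cases h : s n = true
    · rw [if_pos h, if_neg (by simp [h])]
      omega
    · have h' : s n = false := by revert h; cases s n <;> simp
      rw [if_neg h, if_pos (by simp [h'])]
      omega

lemma infinite_of_unbounded {S : Set ℕ} (h : ∀ N, ∃ n, N ≤ n ∧ n ∈ S) : S.Infinite := by
  by_contra h'
  rw [Set.not_infinite] at h'
  obtain ⟨B, hB⟩ := h'.bddAbove
  obtain ⟨n, hn, hmem⟩ := h (B + 1)
  exact absurd (hB hmem) (by omega)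

end Aux

/-- For each `Y ⊆ [ℕ]^∞` with `|Y| < 𝔡` and each `a ∈ [ℕ]^∞`, there is
`s ∈ [ℕ]^∞` with infinite complement such that `y(n) ≤ s(n)` for infinitely many `n` for
each `y ∈ Y`, and `a(n) ≤ (ℕ ∖ s)(n)` for infinitely many `n`. -/
theorem stmt17 (Y : Set CantorSp) (hY : Y ⊆ CInf) (hcard : #Y < frd)
    (a : CantorSp) (ha : a ∈ CInf) :
    ∃ s : CantorSp, s ∈ CInf ∧ (fun n => !s n) ∈ CInf ∧
      (∀ y ∈ Y, {n | enum y n ≤ enum s n}.Infinite) ∧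
      {n | enum a n ≤ enum (fun n => !s n) n}.Infinite := by
  classical
  have hain : {n | a n = true}.Infinite := ha
  -- `a'`: the even-indexed elements of `a`
  set σa : ℕ → ℕ := fun k => Nat.nth (fun n => a n = true) (2 * k) with hσa_def
  have hσa : StrictMono σa := by
    intro x y hxy
    exact Nat.nth_strictMono hain (by omega)
  set a' : CantorSp := mkSet (fun n => ∃ i, σa i = n) with ha'_def
  have henuma' : ∀ k, enum a' k = σa k := by
    intro k
    show Nat.nth (fun n => a' n = true) k = σa k
    have hpe : (fun n => a' n = true) = (fun n => ∃ i, σa i = n) :=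
      funext fun n => propext mkSet_iff
    rw [hpe, nth_sigma hσa]
  have henuma'_sm : StrictMono (enum a') := by
    intro x y hxy
    rw [henuma', henuma']
    exact hσa hxy
  -- `lam`
  set lam : ℕ → ℕ := fun x => enum a' x - x with hlam_def
  have hlam_ge : ∀ x, x ≤ lam x := by
    intro x
    have h1 : 2 * x ≤ Nat.nth (fun n => a n = true) (2 * x) :=
      (Nat.nth_strictMono hain).le_apply
    have h2 : enum a' x = Nat.nth (fun n => a n = true) (2 * x) := by
      rw [henuma' x, hσa_def]
    have h3 : lam x = enum a' x - x := by rw [hlam_def]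
    omega
  have hlam_mono : Monotone lam := fun m m' hm => sub_mono_of_strictMono henuma'_sm hm
  -- the derived functions
  set g : CantorSp → ℕ → ℕ := fun y x => enum y (lam x) - lam x with hg_def
  -- a non-dominated witness against the family of iterated `g`s
  obtain ⟨f, hf⟩ : ∃ f : ℕ → ℕ, ∀ y ∈ Y, ∃ᶠ x in atTop, g y (g y x) < f x := by
    set G : Set (ℕ → ℕ) := (fun y => fun x => g y (g y x)) '' Y with hG_def
    have hGcard : #G < frd := lt_of_le_of_lt Cardinal.mk_image_le hcard
    have hGnotdom : ¬ Dominating G := by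
      intro hdom
      have : frd ≤ #G := csInf_le' ⟨G, hdom, rfl⟩
      exact absurd (lt_of_le_of_lt this hGcard) (lt_irrefl _)
    unfold Dominating at hGnotdom
    push_neg at hGnotdom
    obtain ⟨f, hfw⟩ := hGnotdom
    refine ⟨f, fun y hy => ?_⟩
    have h1 := hfw _ ⟨y, hy, rfl⟩
    rw [LeStar, Filter.not_eventually] at h1
    exact h1.mono (fun x hx => not_le.mp hx)
  -- a fast increasing majorant of `f`
  set fhat : ℕ → ℕ := fun x => x + 1 + (Finset.range (x + 1)).sum f with hfhat_def
  have hfhat_mono : StrictMono fhat := by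
    apply strictMono_nat_of_lt_succ
    intro n
    have hsum : (Finset.range (n + 1)).sum f ≤ (Finset.range (n + 1 + 1)).sum f :=
      Finset.sum_le_sum_of_subset (by intro x hx; simp only [Finset.mem_range] at *; omega)
    have he1 : fhat n = n + 1 + (Finset.range (n + 1)).sum f := by rw [hfhat_def]
    have he2 : fhat (n + 1) = n + 1 + 1 + (Finset.range (n + 1 + 1)).sum f := by rw [hfhat_def]
    omega
  have hfhat_ge : ∀ x, f x ≤ fhat x := by
    intro x
    have : f x ≤ (Finset.range (x + 1)).sum f :=
      Finset.single_le_sum (fun i _ => Nat.zero_le _) (by simp)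
    have he : fhat x = x + 1 + (Finset.range (x + 1)).sum f := by rw [hfhat_def]
    omega
  have hfhat_gt : ∀ x, x < fhat x := by
    intro x
    have he : fhat x = x + 1 + (Finset.range (x + 1)).sum f := by rw [hfhat_def]
    omega
  -- the scale `d`
  set d : ℕ → ℕ := fun j => fhat^[j + 1] 0 with hd_def
  have hd_succ : ∀ j, d (j + 1) = fhat (d j) := by
    intro j
    rw [hd_def]
    exact Function.iterate_succ_apply' fhat (j + 1) 0
  have hd_mono : StrictMono d := by
    apply strictMono_nat_of_lt_succ
    intro n
    rw [hd_succ]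
    exact hfhat_gt _
  -- the index function `J`
  have hJex : ∀ k, ∃ j, k < lam (d j) := by
    intro k
    refine ⟨k + 1, ?_⟩
    have h1 : k + 1 ≤ d (k + 1) := hd_mono.le_apply
    have h2 : d (k + 1) ≤ lam (d (k + 1)) := hlam_ge _
    omega
  set J : ℕ → ℕ := fun k => Nat.find (hJex k) with hJ_def
  have hJ_spec : ∀ k, k < lam (d (J k)) := fun k => Nat.find_spec (hJex k)
  have hJ_min : ∀ k j, k < lam (d j) → J k ≤ j := fun k j h => Nat.find_min' _ h
  have hJ_lb : ∀ k j, lam (d j) ≤ k → j < J k := by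
    intro k j h
    by_contra hle
    push_neg at hle
    have h1 := hJ_spec k
    have h2 : lam (d (J k)) ≤ lam (d j) := hlam_mono (hd_mono.monotone hle)
    omega
  -- the enumeration of `s`
  set σ : ℕ → ℕ := fun k => d (J k) + k with hσ_def
  have hσ_mono : StrictMono σ := by
    intro k k' hkk
    have hJm : J k ≤ J k' := hJ_min k (J k') (lt_of_lt_of_le hkk (le_of_lt (hJ_spec k')))
    have h1 : d (J k) ≤ d (J k') := hd_mono.monotone hJm
    have he1 : σ k = d (J k) + k := by rw [hσ_def]
    have he2 : σ k' = d (J k') + k' := by rw [hσ_def]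
    omega
  -- `s` itself
  set s : CantorSp := mkSet (fun n => ∃ i, σ i = n) with hs_def
  have hs_mem : ∀ n, s n = true ↔ ∃ i, σ i = n := fun n => mkSet_iff
  have henums : ∀ k, enum s k = σ k := by
    intro k
    show Nat.nth (fun n => s n = true) k = σ k
    have hpe : (fun n => s n = true) = (fun n => ∃ i, σ i = n) :=
      funext fun n => propext (hs_mem n)
    rw [hpe, nth_sigma hσ_mono]
  have hs_inf : s ∈ CInf := by
    show {n | s n = true}.Infinite
    have hpe : {n | s n = true} = {n | ∃ i, σ i = n} := Set.ext fun n => hs_mem n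
    rw [hpe]
    exact Set.infinite_of_injective_forall_mem hσ_mono.injective (fun i => ⟨i, rfl⟩)
  -- the "ends of climbs" are not in `s`
  have hE_not : ∀ j, ¬ ∃ i, σ i = d j + lam (d j) := by
    rintro j ⟨i, hi⟩
    have hσi : σ i = d (J i) + i := by rw [hσ_def]
    rcases lt_or_ge i (lam (d j)) with h | h
    · have hJi : J i ≤ j := hJ_min i j h
      have h1 : d (J i) ≤ d j := hd_mono.monotone hJi
      omega
    · have hJi : j < J i := hJ_lb i j h
      have h1 : d (j + 1) ≤ d (J i) := hd_mono.monotone hJi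
      have h2 : d j < d (j + 1) := hd_mono (Nat.lt_succ_self j)
      omega
  have hEmono : StrictMono (fun j => d j + lam (d j)) := by
    intro x y hxy
    have h1 : d x < d y := hd_mono hxy
    have h2 : lam (d x) ≤ lam (d y) := hlam_mono (le_of_lt h1)
    simp only
    omega
  have hcs_inf : (fun n => !s n) ∈ CInf := by
    show {n | (!s n) = true}.Infinite
    have hpe : {n | (!s n) = true} = {n | ¬ (s n = true)} := by
      ext n; simp
    rw [hpe]
    apply Set.infinite_of_injective_forall_mem (f := fun j => d j + lam (d j)) hEmono.injective
    intro j hmem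
    exact hE_not j ((hs_mem _).mp hmem)
  -- counting: `s` has at least `lam (d j)` elements below `d j + lam (d j)`
  have hcount_s : ∀ j, lam (d j) ≤ Nat.count (fun n => s n = true) (d j + lam (d j)) := by
    intro j
    rw [Nat.count_eq_card_filter_range]
    have hsub : (Finset.range (lam (d j))).image σ ⊆
        {x ∈ Finset.range (d j + lam (d j)) | s x = true} := by
      intro m hm
      simp only [Finset.mem_image, Finset.mem_range] at hm
      obtain ⟨i, hi, rfl⟩ := hm
      have h1 : J i ≤ j := hJ_min i j hi
      have h2 : d (J i) ≤ d j := hd_mono.monotone h1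
      have hσi : σ i = d (J i) + i := by rw [hσ_def]
      refine Finset.mem_filter.mpr ⟨Finset.mem_range.mpr (by omega), ?_⟩
      exact (hs_mem _).mpr ⟨i, rfl⟩
    calc lam (d j) = ((Finset.range (lam (d j))).image σ).card := by
          rw [Finset.card_image_of_injective _ hσ_mono.injective, Finset.card_range]
      _ ≤ _ := Finset.card_le_card hsub
  have hcount_cs : ∀ j, Nat.count (fun n => (!s n) = true) (d j + lam (d j)) ≤ d j := by
    intro j
    have h1 := count_bool_not s (d j + lam (d j))
    have h2 := hcount_s j
    omega
  -- the `a`-side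
  have ha_side : {n | enum a n ≤ enum (fun n => !s n) n}.Infinite := by
    apply infinite_of_unbounded
    intro N
    refine ⟨d N, hd_mono.le_apply, ?_⟩
    show enum a (d N) ≤ enum (fun n => !s n) (d N)
    have h1 : enum a (d N) ≤ enum a' (d N) := by
      have he : enum a' (d N) = Nat.nth (fun n => a n = true) (2 * d N) := by
        rw [henuma', hσa_def]
      rw [he]
      exact (Nat.nth_strictMono hain).monotone (by omega)
    have h2' : d N ≤ enum a' (d N) := by
      have he : enum a' (d N) = Nat.nth (fun n => a n = true) (2 * d N) := by
        rw [henuma', hσa_def]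
      have hge : 2 * d N ≤ Nat.nth (fun n => a n = true) (2 * d N) :=
        (Nat.nth_strictMono hain).le_apply
      omega
    have h2 : enum a' (d N) = d N + lam (d N) := by
      have hld : lam (d N) = enum a' (d N) - d N := by rw [hlam_def]
      omega
    have h3 : d N + lam (d N) ≤ enum (fun n => !s n) (d N) := by
      have hinf : (setOf fun n => (!s n) = true).Infinite := hcs_inf
      exact (Nat.count_le_iff_le_nth hinf).mp (hcount_cs N)
    omega
  -- the `Y`-side
  have hy_side : ∀ y ∈ Y, {n | enum y n ≤ enum s n}.Infinite := by
    intro y hy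
    have hyinf : {n | y n = true}.Infinite := hY hy
    have henumy_sm : StrictMono (enum y) := Nat.nth_strictMono hyinf
    have hgy_mono : Monotone (g y) := by
      intro m m' hm
      exact sub_mono_of_strictMono henumy_sm (hlam_mono hm)
    have hcatch : ∀ N, ∃ j, N ≤ j ∧ g y (d j) < d (j + 1) := by
      intro N
      have hfreq := hf y hy
      rw [Filter.frequently_atTop] at hfreq
      obtain ⟨x, hxge, hx⟩ := hfreq (d N)
      have hNx : N ≤ x := le_trans hd_mono.le_apply hxge
      set j := Nat.findGreatest (fun j => d j ≤ x) x with hj_def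
      have hdj : d j ≤ x := by
        rw [hj_def]
        exact Nat.findGreatest_spec (P := fun j => d j ≤ x) hNx hxge
      have hjN : N ≤ j := by
        rw [hj_def]
        exact Nat.le_findGreatest hNx hxge
      have hdj1 : x < d (j + 1) := by
        rcases le_or_gt (d (j + 1)) x with h | h
        · exfalso
          have hj1x : j + 1 ≤ x := le_trans hd_mono.le_apply h
          have h2 : j + 1 ≤ Nat.findGreatest (fun j => d j ≤ x) x := Nat.le_findGreatest hj1x h
          rw [← hj_def] at h2
          omega
        · exact h
      rcases lt_or_ge (g y x) (d (j + 1)) with hcase | hcase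
      · exact ⟨j, hjN, lt_of_le_of_lt (hgy_mono hdj) hcase⟩
      · refine ⟨j + 1, by omega, ?_⟩
        have h1 : g y (d (j + 1)) ≤ g y (g y x) := hgy_mono hcase
        have h2 : f x ≤ fhat x := hfhat_ge x
        have h3 : fhat x ≤ fhat (d (j + 1)) := hfhat_mono.monotone (le_of_lt hdj1)
        rw [hd_succ (j + 1)]
        omega
    apply infinite_of_unbounded
    intro N
    obtain ⟨j, hjN, hcj⟩ := hcatch N
    refine ⟨lam (d j), ?_, ?_⟩
    · have h1 : j ≤ d j := hd_mono.le_apply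
      have h2 := hlam_ge (d j)
      omega
    · show enum y (lam (d j)) ≤ enum s (lam (d j))
      have h1 : enum s (lam (d j)) = σ (lam (d j)) := henums _
      have h2 : j < J (lam (d j)) := hJ_lb (lam (d j)) j (le_refl _)
      have h3 : d (j + 1) ≤ d (J (lam (d j))) := hd_mono.monotone h2
      have h4 : g y (d j) = enum y (lam (d j)) - lam (d j) := by rw [hg_def]
      have h5 : σ (lam (d j)) = d (J (lam (d j))) + lam (d j) := by rw [hσ_def]
      omega
  exact ⟨s, hs_inf, hcs_inf, hy_side, ha_side⟩
end OmissionOfIntervals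
end
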